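/- There exists an absolute constant C > 0 such that for every integer n ≥ 3 and every real u ≥ 0, | (c_n / √(n−1)) · (max(1 − u²/(n−1), 0))^{(n−2)/2} − e^{−u²/2} | ≤ C/n, where c_n = √2 · Γ((n+1)/2) / Γ(n/2). -/

import Mathlib

open Real
set_option maxHeartbeats 1000000

lemma gamma_sq_le (x : ℝ) (hx : 0 < x) :
    Real.Gamma (x + 1/2) ^ 2 ≤ Real.Gamma x * Real.Gamma (x + 1) := by
  have h := Real.convexOn_log_Gamma.2 (Set.mem_Ioi.2 hx)
    (Set.mem_Ioi.2 (by linarith : (0:ℝ) < x + 1)) (by norm_num : (0:ℝ) ≤ (1/2:ℝ))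
    (by norm_num : (0:ℝ) ≤ (1/2:ℝ)) (by norm_num)
  simp only [Function.comp_apply, smul_eq_mul] at h
  rw [show (1/2:ℝ)*x + 1/2*(x+1) = x + 1/2 by ring] at h
  have hg1 : 0 < Real.Gamma (x + 1/2) := Real.Gamma_pos_of_pos (by linarith)
  have hg2 : 0 < Real.Gamma x := Real.Gamma_pos_of_pos hx
  have hg3 : 0 < Real.Gamma (x + 1) := Real.Gamma_pos_of_pos (by linarith)
  have := Real.exp_le_exp.2 (by linarith : 2 * Real.log (Real.Gamma (x+1/2)) ≤ Real.log (Real.Gamma x) + Real.log (Real.Gamma (x+1)))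
  rw [Real.exp_add, Real.exp_log hg2, Real.exp_log hg3] at this
  calc Real.Gamma (x + 1/2) ^ 2 = Real.exp (2 * Real.log (Real.Gamma (x+1/2))) := by
        rw [mul_comm, Real.exp_mul, Real.exp_log hg1]; norm_num
    _ ≤ _ := this


lemma exp_neg_le_inv (y : ℝ) (hy : 0 < y) : Real.exp (-y) ≤ 1 / y := by
  have h1 : y ≤ Real.exp y := by have := Real.add_one_le_exp y; linarith
  rw [Real.exp_neg, inv_eq_one_div]
  exact one_div_le_one_div_of_le hy h1

lemma core_density (m t : ℝ) (hm : 2 ≤ m) (ht : 0 ≤ t) :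
    |(max (1 - t/m) 0) ^ ((m-1)/2) - Real.exp (-t/2)| ≤ 16/m := by
  have hm0 : (0:ℝ) < m := by linarith
  have hp : (0:ℝ) < (m-1)/2 := by linarith
  have hmono : ∀ a b : ℝ, a ≤ b → a/m ≤ b/m := fun a b h => (div_le_div_iff_of_pos_right hm0).2 h
  rcases le_or_gt m t with hcase | hcase
  · -- t ≥ m : density is 0
    have hmax : max (1 - t/m) 0 = 0 := by
      apply max_eq_right
      have : 1 ≤ t/m := (one_le_div hm0).2 hcase
      linarith
    rw [hmax, Real.zero_rpow (ne_of_gt hp), zero_sub, abs_neg, abs_of_nonneg (Real.exp_nonneg _)]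
    calc Real.exp (-t/2) ≤ Real.exp (-(m/2)) := by
          apply Real.exp_le_exp.2; linarith
      _ ≤ 1/(m/2) := exp_neg_le_inv _ (by linarith)
      _ = 2/m := by field_simp
      _ ≤ 16/m := hmono 2 16 (by norm_num)
  · -- t < m
    set x : ℝ := t/m with hxdef
    have hx0 : 0 ≤ x := by positivity
    have hx1 : x < 1 := (div_lt_one hm0).2 hcase
    have h1x : 0 < 1 - x := by linarith
    have hmax : max (1 - t/m) 0 = 1 - x := max_eq_left (by linarith)
    have htx : t = m * x := by rw [hxdef]; field_simp
    have hg : Real.exp (-t/2) = Real.exp (-(m*x)/2) := by rw [htx]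
    set L : ℝ := Real.log (1 - x) with hLdef
    have hh : (max (1 - t/m) 0) ^ ((m-1)/2) = Real.exp ((m-1)/2 * L) := by
      rw [hmax, Real.rpow_def_of_pos h1x, mul_comm]
    have Lle : L ≤ -x := by
      have := Real.log_le_sub_one_of_pos h1x
      linarith
    have Lge : -(x/(1-x)) ≤ L := by
      have h2 := Real.log_le_sub_one_of_pos (show (0:ℝ) < (1-x)⁻¹ by positivity)
      rw [Real.log_inv] at h2
      have hinv : (1-x)⁻¹ - 1 = x/(1-x) := by field_simp; ring
      rw [hinv] at h2
      linarith
    rw [hh, hg, abs_sub_le_iff]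
    constructor
    · -- upper: h - g ≤ 16/m
      have hub : Real.exp ((m-1)/2 * L) ≤ Real.exp (-((m-1)*x/2)) :=
        Real.exp_le_exp.2 (by nlinarith)
      have e1 : Real.exp (x/2) - 1 ≤ (x/2) * Real.exp (x/2) := by
        have h := Real.add_one_le_exp (-(x/2))
        have hmul := mul_le_mul_of_nonneg_left h (Real.exp_nonneg (x/2))
        have hid : Real.exp (x/2) * Real.exp (-(x/2)) = 1 := by
          rw [← Real.exp_add]; simp
        rw [hid] at hmul
        ring_nf at hmul ⊢
        linarith
      have e2 : Real.exp (-((m-1)*x/2)) - Real.exp (-(m*x)/2)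
          = Real.exp (-(m*x)/2) * (Real.exp (x/2) - 1) := by
        rw [mul_sub, ← Real.exp_add, mul_one]
        congr 2
        ring
      have e3 : Real.exp (-(m*x)/2) * ((x/2) * Real.exp (x/2)) = (x/2) * Real.exp (-((m-1)*x/2)) := by
        rw [mul_comm (Real.exp (-(m*x)/2)), mul_assoc, ← Real.exp_add]
        congr 2
        ring
      have e4 : Real.exp (-((m-1)*x/2)) ≤ Real.exp (-(m*x/4)) := by
        apply Real.exp_le_exp.2; nlinarith
      have e5 : (x/2) * Real.exp (-(m*x/4)) ≤ 2/m := by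
        rcases eq_or_lt_of_le hx0 with h0 | h0
        · rw [← h0]; simp; positivity
        · have hs : 0 < m*x/4 := by positivity
          have hle := exp_neg_le_inv (m*x/4) hs
          calc (x/2) * Real.exp (-(m*x/4)) ≤ (x/2) * (1/(m*x/4)) := by
                apply mul_le_mul_of_nonneg_left hle (by linarith)
            _ = 2/m := by field_simp; ring
      have key : Real.exp (-((m-1)*x/2)) - Real.exp (-(m*x)/2) ≤ 2/m := by
        calc Real.exp (-((m-1)*x/2)) - Real.exp (-(m*x)/2)
            = Real.exp (-(m*x)/2) * (Real.exp (x/2) - 1) := e2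
          _ ≤ Real.exp (-(m*x)/2) * ((x/2) * Real.exp (x/2)) :=
              mul_le_mul_of_nonneg_left e1 (Real.exp_nonneg _)
          _ = (x/2) * Real.exp (-((m-1)*x/2)) := e3
          _ ≤ (x/2) * Real.exp (-(m*x/4)) := mul_le_mul_of_nonneg_left e4 (by linarith)
          _ ≤ 2/m := e5
      have h216 : (2:ℝ)/m ≤ 16/m := hmono 2 16 (by norm_num)
      linarith
    · -- lower: g - h ≤ 16/m
      rcases le_or_gt x (1/2) with hx2 | hx2
      · -- x ≤ 1/2
        have hlb : Real.exp (-((m-1)/2 * (x/(1-x)))) ≤ Real.exp ((m-1)/2 * L) := by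
          apply Real.exp_le_exp.2
          nlinarith [Lge]
        set Δ : ℝ := (m-1)/2 * (x/(1-x)) - m*x/2 with hD
        have hq : x/(1-x) ≤ x + 2*x^2 := by
          rw [div_le_iff₀ h1x]
          nlinarith
        have hDle : Δ ≤ m * x^2 := by
          have h5 := mul_le_mul_of_nonneg_left hq (le_of_lt hp)
          rw [hD]
          nlinarith [h5]
        have split : Real.exp (-((m-1)/2 * (x/(1-x)))) = Real.exp (-(m*x)/2) * Real.exp (-Δ) := by
          rw [← Real.exp_add]
          congr 1
          rw [hD]; ring
        have h1mD : 1 - Δ ≤ Real.exp (-Δ) := by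
          have := Real.add_one_le_exp (-Δ); linarith
        have gmh : Real.exp (-(m*x)/2) - Real.exp ((m-1)/2 * L) ≤ Real.exp (-(m*x)/2) * Δ := by
          have hchain : Real.exp (-(m*x)/2) * (1 - Δ) ≤ Real.exp ((m-1)/2 * L) := by
            calc Real.exp (-(m*x)/2) * (1 - Δ) ≤ Real.exp (-(m*x)/2) * Real.exp (-Δ) :=
                  mul_le_mul_of_nonneg_left h1mD (Real.exp_nonneg _)
              _ = Real.exp (-((m-1)/2 * (x/(1-x)))) := split.symm
              _ ≤ _ := hlb
          nlinarith [Real.exp_pos (-(m*x)/2)]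
        have final : Real.exp (-(m*x)/2) * (m * x^2) ≤ 16/m := by
          rcases eq_or_lt_of_le hx0 with h0 | h0
          · rw [← h0]; simp; positivity
          · have hsq : (m*x/2)^2 ≤ 4 * Real.exp (m*x/2) := by
              have h1 : m*x/2 ≤ 2 * Real.exp (m*x/4) := by
                have := Real.add_one_le_exp (m*x/4); linarith
              have h3 : Real.exp (m*x/4) * Real.exp (m*x/4) = Real.exp (m*x/2) := by
                rw [← Real.exp_add]; congr 1; ring
              have h4 : (m*x/2)^2 ≤ (2 * Real.exp (m*x/4))^2 :=
                pow_le_pow_left₀ (by positivity) h1 2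
              calc (m*x/2)^2 ≤ (2 * Real.exp (m*x/4))^2 := h4
                _ = 4 * (Real.exp (m*x/4) * Real.exp (m*x/4)) := by ring
                _ = 4 * Real.exp (m*x/2) := by rw [h3]
            have hexp : Real.exp (-(m*x)/2) = (Real.exp (m*x/2))⁻¹ := by
              rw [show -(m*x)/2 = -(m*x/2) by ring, Real.exp_neg]
            rw [hexp, inv_mul_le_iff₀ (Real.exp_pos _)]
            have hid : m * x^2 = (4/m) * (m*x/2)^2 := by field_simp; ring
            rw [hid]
            calc (4/m) * (m*x/2)^2 ≤ (4/m) * (4 * Real.exp (m*x/2)) :=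
                  mul_le_mul_of_nonneg_left hsq (by positivity)
              _ = Real.exp (m*x/2) * (16/m) := by ring
        have hmono2 : Real.exp (-(m*x)/2) * Δ ≤ Real.exp (-(m*x)/2) * (m * x^2) :=
          mul_le_mul_of_nonneg_left hDle (Real.exp_nonneg _)
        linarith
      · -- x > 1/2 : both terms small
        have hgsmall : Real.exp (-(m*x)/2) ≤ 8/m := by
          calc Real.exp (-(m*x)/2) ≤ Real.exp (-(m/4)) := by
                apply Real.exp_le_exp.2; nlinarith
            _ ≤ 1/(m/4) := exp_neg_le_inv _ (by linarith)
            _ = 4/m := by field_simp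
            _ ≤ 8/m := hmono 4 8 (by norm_num)
        have hhpos : 0 < Real.exp ((m-1)/2 * L) := Real.exp_pos _
        have h816 : (8:ℝ)/m ≤ 16/m := hmono 8 16 (by norm_num)
        linarith


lemma gamma_ratio_bounds (n : ℕ) (hn : 3 ≤ n) :
    Real.sqrt ((n:ℝ) - 1) ≤ Real.sqrt 2 * Real.Gamma (((n:ℝ)+1)/2) / Real.Gamma ((n:ℝ)/2) ∧
    Real.sqrt 2 * Real.Gamma (((n:ℝ)+1)/2) / Real.Gamma ((n:ℝ)/2) ≤ Real.sqrt (n:ℝ) := by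
  have hn' : (3:ℝ) ≤ (n:ℝ) := by exact_mod_cast hn
  set x : ℝ := (n:ℝ)/2 with hxdef
  have hx : 0 < x := by positivity
  have hx2 : (0:ℝ) < x - 1/2 := by simp only [hxdef]; linarith
  have hA : 0 < Real.Gamma (x + 1/2) := Real.Gamma_pos_of_pos (by linarith)
  have hB : 0 < Real.Gamma x := Real.Gamma_pos_of_pos hx
  have hC : 0 < Real.Gamma (x - 1/2) := Real.Gamma_pos_of_pos hx2
  have h1 : Real.Gamma (x + 1/2) ^ 2 ≤ Real.Gamma x * (x * Real.Gamma x) := by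
    have := gamma_sq_le x hx
    rwa [Real.Gamma_add_one (ne_of_gt hx)] at this
  have hAC : Real.Gamma (x + 1/2) = (x - 1/2) * Real.Gamma (x - 1/2) := by
    have := Real.Gamma_add_one (ne_of_gt hx2)
    rw [show x - 1/2 + 1 = x + 1/2 by ring] at this
    exact this
  have h2 : Real.Gamma x ^ 2 ≤ Real.Gamma (x - 1/2) * Real.Gamma (x + 1/2) := by
    have := gamma_sq_le (x - 1/2) hx2
    rw [show x - 1/2 + 1/2 = x by ring, show x - 1/2 + 1 = x + 1/2 by ring] at this
    exact this
  set G : ℝ := Real.sqrt 2 * Real.Gamma (x + 1/2) / Real.Gamma x with hGdef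
  have hG : 0 < G := by positivity
  have hG2 : G ^ 2 = 2 * Real.Gamma (x + 1/2) ^ 2 / Real.Gamma x ^ 2 := by
    rw [hGdef, div_pow, mul_pow, Real.sq_sqrt (by norm_num : (0:ℝ) ≤ 2)]
  have hupper : G ^ 2 ≤ (n:ℝ) := by
    rw [hG2, div_le_iff₀ (by positivity)]
    have : (n:ℝ) = 2 * x := by rw [hxdef]; ring
    nlinarith [sq_nonneg (Real.Gamma x)]
  have hlower : (n:ℝ) - 1 ≤ G ^ 2 := by
    rw [hG2, le_div_iff₀ (by positivity)]
    -- n - 1 = 2x - 1 = 2*(x - 1/2); B² ≤ C*A and A = (x-1/2)*C ⇒ B² ≤ A²/(x-1/2)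
    have key : (x - 1/2) * Real.Gamma x ^ 2 ≤ Real.Gamma (x + 1/2) ^ 2 := by
      calc (x - 1/2) * Real.Gamma x ^ 2 ≤ (x - 1/2) * (Real.Gamma (x - 1/2) * Real.Gamma (x + 1/2)) := by
            exact mul_le_mul_of_nonneg_left h2 (le_of_lt hx2)
        _ = Real.Gamma (x + 1/2) ^ 2 := by rw [hAC]; ring
    have : (n:ℝ) - 1 = 2 * (x - 1/2) := by rw [hxdef]; ring
    nlinarith
  have hGeq : Real.sqrt 2 * Real.Gamma (((n:ℝ)+1)/2) / Real.Gamma ((n:ℝ)/2) = G := by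
    rw [hGdef, hxdef, show (n:ℝ)/2 + 1/2 = ((n:ℝ)+1)/2 by ring]
  rw [hGeq]
  constructor
  · calc Real.sqrt ((n:ℝ) - 1) ≤ Real.sqrt (G^2) := Real.sqrt_le_sqrt hlower
      _ = G := Real.sqrt_sq hG.le
  · calc G = Real.sqrt (G^2) := (Real.sqrt_sq hG.le).symm
      _ ≤ Real.sqrt (n:ℝ) := Real.sqrt_le_sqrt hupper

/-- Uniform `O(1/n)` closeness of the (normalized) spherical density
to the Gaussian density. -/
theorem spherical_density_gaussian_approx :
    ∃ C : ℝ, 0 < C ∧ ∀ n : ℕ, 3 ≤ n → ∀ u : ℝ, 0 ≤ u →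
      |Real.sqrt 2 * Real.Gamma (((n : ℝ) + 1) / 2) / Real.Gamma ((n : ℝ) / 2) /
            Real.sqrt ((n : ℝ) - 1) *
            (max (1 - u ^ 2 / ((n : ℝ) - 1)) 0) ^ (((n : ℝ) - 2) / 2)
          - Real.exp (-u ^ 2 / 2)| ≤ C / n := by
  refine ⟨25, by norm_num, fun n hn u hu => ?_⟩
  have hn3 : (3:ℝ) ≤ (n:ℝ) := by exact_mod_cast hn
  set m : ℝ := (n:ℝ) - 1 with hmdef
  have hm : 2 ≤ m := by rw [hmdef]; linarith
  have hm0 : (0:ℝ) < m := by linarith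
  have hn0 : (0:ℝ) < (n:ℝ) := by linarith
  set G : ℝ := Real.sqrt 2 * Real.Gamma (((n:ℝ)+1)/2) / Real.Gamma ((n:ℝ)/2) with hGdef
  obtain ⟨hGlo, hGhi⟩ := gamma_ratio_bounds n hn
  set r : ℝ := G / Real.sqrt m with hrdef
  have hsm : 0 < Real.sqrt m := Real.sqrt_pos.2 hm0
  have hr1 : 1 ≤ r := by
    rw [hrdef, le_div_iff₀ hsm, one_mul]
    exact hGlo
  have hrle : r ≤ 1 + 1/(n:ℝ) := by
    have h1 : r ≤ Real.sqrt (n:ℝ) / Real.sqrt m := by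
      rw [hrdef]
      exact (div_le_div_iff_of_pos_right hsm).2 hGhi
    have h2 : Real.sqrt (n:ℝ) / Real.sqrt m = Real.sqrt ((n:ℝ)/m) :=
      (Real.sqrt_div' ((n:ℝ)) hm0.le).symm
    have h3 : (n:ℝ)/m ≤ (1 + 1/(n:ℝ))^2 := by
      rw [div_le_iff₀ hm0, hmdef]
      have hone : (1 + 1/(n:ℝ)) = ((n:ℝ)+1)/(n:ℝ) := by field_simp
      rw [hone, div_pow, div_mul_eq_mul_div, le_div_iff₀ (by positivity)]
      nlinarith
    have h4 : Real.sqrt ((n:ℝ)/m) ≤ 1 + 1/(n:ℝ) := by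
      calc Real.sqrt ((n:ℝ)/m) ≤ Real.sqrt ((1 + 1/(n:ℝ))^2) := Real.sqrt_le_sqrt h3
        _ = 1 + 1/(n:ℝ) := Real.sqrt_sq (by positivity)
    calc r ≤ Real.sqrt (n:ℝ) / Real.sqrt m := h1
      _ = Real.sqrt ((n:ℝ)/m) := h2
      _ ≤ 1 + 1/(n:ℝ) := h4
  set h : ℝ := (max (1 - u ^ 2 / ((n : ℝ) - 1)) 0) ^ (((n : ℝ) - 2) / 2) with hhdef
  have hexp_eq : ((n:ℝ) - 2)/2 = (m - 1)/2 := by rw [hmdef]; ring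
  have hcore : |h - Real.exp (-u^2/2)| ≤ 16/m := by
    have := core_density m (u^2) hm (by positivity)
    rw [hhdef, hexp_eq, ← hmdef]
    convert this using 3
    all_goals ring
  have hh0 : 0 ≤ h := by
    rw [hhdef]
    positivity
  have hh1 : h ≤ 1 := by
    rw [hhdef]
    apply Real.rpow_le_one (le_max_right _ _) ?_ (by linarith)
    apply max_le ?_ (by norm_num)
    have : 0 ≤ u^2/((n:ℝ)-1) := by positivity
    linarith
  have hgoal_eq : Real.sqrt 2 * Real.Gamma (((n : ℝ) + 1) / 2) / Real.Gamma ((n : ℝ) / 2) /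
            Real.sqrt ((n : ℝ) - 1) *
            (max (1 - u ^ 2 / ((n : ℝ) - 1)) 0) ^ (((n : ℝ) - 2) / 2) = r * h := by
    rw [hrdef, hGdef, hhdef, hmdef]
  rw [hgoal_eq]
  have hdecomp : r * h - Real.exp (-u^2/2) = (r - 1) * h + (h - Real.exp (-u^2/2)) := by ring
  rw [hdecomp]
  have hstep1 : |(r - 1) * h| ≤ 1/(n:ℝ) := by
    rw [abs_mul, abs_of_nonneg (by linarith : (0:ℝ) ≤ r - 1), abs_of_nonneg hh0]
    calc (r - 1) * h ≤ (1/(n:ℝ)) * 1 := by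
          apply mul_le_mul (by linarith) hh1 hh0 (by positivity)
      _ = 1/(n:ℝ) := by ring
  have hstep2 : (16:ℝ)/m ≤ 24/(n:ℝ) := by
    rw [div_le_div_iff₀ hm0 hn0, hmdef]
    nlinarith
  calc |(r - 1) * h + (h - Real.exp (-u^2/2))| ≤ |(r - 1) * h| + |h - Real.exp (-u^2/2)| :=
        abs_add_le _ _
    _ ≤ 1/(n:ℝ) + 16/m := add_le_add hstep1 hcore
    _ ≤ 1/(n:ℝ) + 24/(n:ℝ) := by linarith
    _ = 25/(n:ℝ) := by ring
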